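/- Let A', B', N, C be positive integers with A' + B' < C + N (i.e., writing A = −A', B = −B', the condition −A − B + C + N − 1 > 0 holds). Then ∑_{r=0}^{L} q^{r(C+r−1)} · C_q(A'+B'+C+N−r−1, N−r) · C_q(B'+C−1, B'−r) · C_q(A', r) = C_q(A'+C+N−1, N) · C_q(B'+C+N−1, B'), where L = min(A', B', N, A'+B'+C+N−1). -/

import Mathlib

open Finset

/-- The q-Pochhammer symbol `(a;q)_n = ∏_{j=0}^{n-1} (1 - a q^j)`. -/
noncomputable def qPoch (q a : RatFunc ℚ) (n : ℕ) : RatFunc ℚ :=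
  ∏ j ∈ Finset.range n, (1 - a * q ^ j)

/-- The Gaussian (q-binomial) coefficient `C_q(m, k)`, defined as
`(q;q)_m / ((q;q)_k (q;q)_{m-k})` for `0 ≤ k ≤ m`, and `0` otherwise. -/
noncomputable def qBinom (q : RatFunc ℚ) (m k : ℤ) : RatFunc ℚ :=
  if 0 ≤ k ∧ k ≤ m then
    qPoch q q m.toNat / (qPoch q q k.toNat * qPoch q q (m - k).toNat)
  else 0

namespace QS
noncomputable abbrev q : RatFunc ℚ := RatFunc.X
noncomputable def f (n : ℕ) : RatFunc ℚ := qPoch q q n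
lemma q_ne_zero : (q : RatFunc ℚ) ≠ 0 := RatFunc.X_ne_zero
lemma one_sub_q_pow_ne {n : ℕ} (hn : 1 ≤ n) : (1 : RatFunc ℚ) - q ^ n ≠ 0 := by
  intro h
  have h2 : (q : RatFunc ℚ) ^ n = 1 := by linear_combination -h
  have h3 : (Polynomial.X : Polynomial ℚ) ^ n = 1 := by
    apply RatFunc.algebraMap_injective ℚ ?_
    · simpa [RatFunc.algebraMap_X] using h2
  have := congrArg Polynomial.natDegree h3
  simp [Polynomial.natDegree_X_pow] at this
  omega
lemma f_zero : f 0 = 1 := by simp [f, qPoch]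
lemma f_succ (n : ℕ) : f (n + 1) = f n * (1 - q ^ (n + 1)) := by
  simp [f, qPoch, Finset.prod_range_succ, ← pow_succ']
lemma f_ne (n : ℕ) : f n ≠ 0 := by
  induction n with
  | zero => simp [f_zero]
  | succ n ih => rw [f_succ]; exact mul_ne_zero ih (one_sub_q_pow_ne (by omega))
lemma qBinom_of_not (m k : ℤ) (h : ¬(0 ≤ k ∧ k ≤ m)) : qBinom q m k = 0 := if_neg h
lemma qBinom_neg {m k : ℤ} (h : k < 0) : qBinom q m k = 0 := qBinom_of_not m k (by omega)
lemma qBinom_gt {m k : ℤ} (h : m < k) : qBinom q m k = 0 := qBinom_of_not m k (by omega)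
lemma qBinom_eq_f (m k : ℕ) (h : k ≤ m) :
    qBinom q (m : ℤ) (k : ℤ) = f m / (f k * f (m - k)) := by
  rw [qBinom, if_pos ⟨Int.natCast_nonneg k, by exact_mod_cast h⟩]
  rw [← Nat.cast_sub h]; simp [f]
lemma qBinom_zero {m : ℤ} (h : 0 ≤ m) : qBinom q m 0 = 1 := by
  obtain ⟨M, rfl⟩ := Int.eq_ofNat_of_zero_le h
  rw [show (0:ℤ) = ((0:ℕ):ℤ) by simp, qBinom_eq_f M 0 (by omega)]
  simp [f_zero, div_self (f_ne M)]
lemma qBinom_self {m : ℤ} (h : 0 ≤ m) : qBinom q m m = 1 := by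
  obtain ⟨M, rfl⟩ := Int.eq_ofNat_of_zero_le h
  rw [qBinom_eq_f M M le_rfl]
  simp [f_zero, div_self (f_ne M)]

lemma pascal_core (M K : ℕ) (h1 : 1 ≤ K) (h2 : K ≤ M) :
    qBinom q ((M:ℤ)+1) K = qBinom q M K + q ^ ((M:ℤ)+1-K) * qBinom q M ((K:ℤ)-1) := by
  have e1 : ((M:ℤ)+1) = ((M+1 : ℕ) : ℤ) := by push_cast; ring
  have e2 : ((K:ℤ)-1) = ((K-1 : ℕ) : ℤ) := by omega
  have e3 : ((M:ℤ)+1-K) = ((M+1-K : ℕ) : ℤ) := by omega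
  rw [e3, e1, e2, zpow_natCast,
    qBinom_eq_f (M+1) K (by omega), qBinom_eq_f M K h2, qBinom_eq_f M (K-1) (by omega)]
  have hf1 : f (M+1) = f M * (1 - q ^ (M+1)) := f_succ M
  have hf2 : f K = f (K-1) * (1 - q ^ K) := by
    rw [show K = (K-1)+1 by omega] at *; exact f_succ (K-1)
  have hf3 : f (M+1-K) = f (M-K) * (1 - q ^ (M+1-K)) := by
    rw [show M+1-K = (M-K)+1 by omega]; exact f_succ (M-K)
  have hmk : M - (K-1) = M+1-K := by omega
  have hq : q ^ K * q ^ (M+1-K) = q ^ (M+1) := by rw [← pow_add]; congr 1; omega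
  rw [hmk]
  field_simp [f_ne]
  rw [hf1, hf2, hf3]
  rw [← hq]; ring

lemma pascal2_core (M K : ℕ) (h1 : 1 ≤ K) (h2 : K ≤ M) :
    qBinom q ((M:ℤ)+1) K = qBinom q M ((K:ℤ)-1) + q ^ (K:ℤ) * qBinom q M K := by
  have e1 : ((M:ℤ)+1) = ((M+1 : ℕ) : ℤ) := by push_cast; ring
  have e2 : ((K:ℤ)-1) = ((K-1 : ℕ) : ℤ) := by omega
  rw [e1, e2, zpow_natCast,
    qBinom_eq_f (M+1) K (by omega), qBinom_eq_f M K h2, qBinom_eq_f M (K-1) (by omega)]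
  have hf1 : f (M+1) = f M * (1 - q ^ (M+1)) := f_succ M
  have hf2 : f K = f (K-1) * (1 - q ^ K) := by
    rw [show K = (K-1)+1 by omega] at *; exact f_succ (K-1)
  have hf3 : f (M+1-K) = f (M-K) * (1 - q ^ (M+1-K)) := by
    rw [show M+1-K = (M-K)+1 by omega]; exact f_succ (M-K)
  have hmk : M - (K-1) = M+1-K := by omega
  have hq : q ^ K * q ^ (M+1-K) = q ^ (M+1) := by rw [← pow_add]; congr 1; omega
  rw [hmk]
  field_simp [f_ne]
  rw [hf1, hf2, hf3]
  rw [← hq]; ring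

lemma qBinom_m_neg {m : ℤ} (k : ℤ) (h : m < 0) : qBinom q m k = 0 :=
  qBinom_of_not m k (by omega)

lemma pascal1 (m k : ℤ) (hm : m ≠ -1) :
    qBinom q (m+1) k = qBinom q m k + q ^ (m+1-k) * qBinom q m (k-1) := by
  rcases lt_or_ge m (-1) with hm' | hm'
  · rw [qBinom_m_neg k (by omega), qBinom_m_neg k (by omega),
      qBinom_m_neg ((k:ℤ)-1) (by omega)]; ring
  · have hm0 : 0 ≤ m := by omega
    obtain ⟨M, rfl⟩ := Int.eq_ofNat_of_zero_le hm0
    rcases lt_or_ge k 0 with hk | hk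
    · rw [qBinom_neg hk, qBinom_neg hk, qBinom_neg (by omega : k-1 < 0)]; ring
    obtain ⟨K, rfl⟩ := Int.eq_ofNat_of_zero_le hk
    rcases Nat.eq_zero_or_pos K with rfl | hK1
    · simp only [Nat.cast_zero]
      rw [qBinom_zero (by positivity), qBinom_zero (by positivity),
        qBinom_neg (show (0:ℤ)-1 < 0 by norm_num)]; ring
    rcases le_or_gt (K:ℤ) M with hKM | hKM
    · exact pascal_core M K hK1 (by exact_mod_cast hKM)
    rcases eq_or_lt_of_le (by exact_mod_cast hKM : (M:ℤ)+1 ≤ K) with hKM2 | hKM2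
    · rw [← hKM2, show (M:ℤ)+1-1 = (M:ℤ) by ring,
        show (M:ℤ)+1-((M:ℤ)+1) = 0 by ring,
        qBinom_self (show (0:ℤ) ≤ (M:ℤ)+1 by positivity),
        qBinom_gt (show (M:ℤ) < (M:ℤ)+1 by omega),
        qBinom_self (show (0:ℤ) ≤ (M:ℤ) by positivity), zpow_zero]
      ring
    · rw [qBinom_gt (show (M:ℤ)+1 < (K:ℤ) by omega),
        qBinom_gt (show (M:ℤ) < (K:ℤ) by omega),
        qBinom_gt (show (M:ℤ) < (K:ℤ)-1 by omega)]; ring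

lemma pascal2 (m k : ℤ) (hm : m ≠ -1) :
    qBinom q (m+1) k = qBinom q m (k-1) + q ^ k * qBinom q m k := by
  rcases lt_or_ge m (-1) with hm' | hm'
  · rw [qBinom_m_neg k (by omega), qBinom_m_neg k (by omega),
      qBinom_m_neg ((k:ℤ)-1) (by omega)]; ring
  · have hm0 : 0 ≤ m := by omega
    obtain ⟨M, rfl⟩ := Int.eq_ofNat_of_zero_le hm0
    rcases lt_or_ge k 0 with hk | hk
    · rw [qBinom_neg hk, qBinom_neg hk, qBinom_neg (by omega : k-1 < 0)]; ring
    obtain ⟨K, rfl⟩ := Int.eq_ofNat_of_zero_le hk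
    rcases Nat.eq_zero_or_pos K with rfl | hK1
    · simp only [Nat.cast_zero]
      rw [qBinom_zero (by positivity), qBinom_zero (by positivity),
        qBinom_neg (show (0:ℤ)-1 < 0 by norm_num), zpow_zero]; ring
    rcases le_or_gt (K:ℤ) M with hKM | hKM
    · exact pascal2_core M K hK1 (by exact_mod_cast hKM)
    rcases eq_or_lt_of_le (by exact_mod_cast hKM : (M:ℤ)+1 ≤ K) with hKM2 | hKM2
    · rw [← hKM2, show (M:ℤ)+1-1 = (M:ℤ) by ring,
        qBinom_self (show (0:ℤ) ≤ (M:ℤ)+1 by positivity),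
        qBinom_gt (show (M:ℤ) < (M:ℤ)+1 by omega),
        qBinom_self (show (0:ℤ) ≤ (M:ℤ) by positivity)]
      ring
    · rw [qBinom_gt (show (M:ℤ)+1 < (K:ℤ) by omega),
        qBinom_gt (show (M:ℤ) < (K:ℤ) by omega),
        qBinom_gt (show (M:ℤ) < (K:ℤ)-1 by omega)]; ring

noncomputable def Sg (A B : ℕ) (C : ℤ) (N : ℕ) : RatFunc ℚ :=
  ∑ r ∈ Finset.range (N+1),
    q ^ ((r:ℤ) * (C + (r:ℤ) - 1)) *
      qBinom q ((A:ℤ) + (B:ℤ) + C + (N:ℤ) - (r:ℤ) - 1) ((N:ℤ) - (r:ℤ)) *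
      qBinom q ((B:ℤ) + C - 1) ((B:ℤ) - (r:ℤ)) * qBinom q (A:ℤ) (r:ℤ)

noncomputable def Rg (A B : ℕ) (C : ℤ) (N : ℕ) : RatFunc ℚ :=
  qBinom q ((A:ℤ) + C + (N:ℤ) - 1) (N:ℤ) * qBinom q ((B:ℤ) + C + (N:ℤ) - 1) (B:ℤ)

lemma base_N0 (A B : ℕ) (C : ℤ) (hA : 1 ≤ A) (hBC : 1 ≤ (B:ℤ) + C) :
    Sg A B C 0 = Rg A B C 0 := by
  have hA' : (1:ℤ) ≤ (A:ℤ) := by exact_mod_cast hA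
  rw [Sg, Rg, Finset.sum_range_one]
  push_cast
  rw [show ((0:ℤ) * (C + 0 - 1)) = 0 by ring, zpow_zero,
    show ((A:ℤ) + B + C + 0 - 0 - 1) = (A:ℤ) + B + C - 1 by ring,
    show ((B:ℤ) - 0) = (B:ℤ) by ring,
    show ((A:ℤ) + C + 0 - 1) = (A:ℤ) + C - 1 by ring,
    show ((B:ℤ) + C + 0 - 1) = (B:ℤ) + C - 1 by ring]
  rw [qBinom_zero (show (0:ℤ) ≤ (A:ℤ) + B + C - 1 by omega),
    qBinom_zero (show (0:ℤ) ≤ (A:ℤ) by omega)]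
  rcases le_or_gt 0 ((A:ℤ) + C - 1) with h0 | h0
  · rw [qBinom_zero h0]; ring
  · rw [qBinom_of_not ((A:ℤ) + C - 1) 0 (by omega),
      qBinom_gt (show (B:ℤ) + C - 1 < (B:ℤ) by omega)]
    ring

lemma base_B0 (A : ℕ) (C : ℤ) (N : ℕ) (hC : 1 ≤ C) :
    Sg A 0 C N = Rg A 0 C N := by
  rw [Sg, Rg]
  rw [Finset.sum_eq_single_of_mem 0 (Finset.mem_range.mpr (by omega))]
  · push_cast
    rw [show ((0:ℤ) * (C + 0 - 1)) = 0 by ring, zpow_zero,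
      show ((A:ℤ) + 0 + C + N - 0 - 1) = (A:ℤ) + C + N - 1 by ring,
      show ((N:ℤ) - 0) = (N:ℤ) by ring,
      show ((0:ℤ) + C - 1) = C - 1 by ring,
      show ((0:ℤ) + C + N - 1) = C + N - 1 by ring]
    rw [qBinom_zero (show (0:ℤ) ≤ C - 1 by omega),
      qBinom_zero (show (0:ℤ) ≤ (A:ℤ) by positivity),
      qBinom_zero (show (0:ℤ) ≤ C + (N:ℤ) - 1 by have := Int.natCast_nonneg N; omega)]
    ring
  · intro r hr hr0
    rw [qBinom_neg (show ((0:ℕ):ℤ) - (r:ℤ) < 0 by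
      have : 1 ≤ r := Nat.one_le_iff_ne_zero.mpr hr0
      push_cast; omega)]
    ring

lemma prodswap (A B M : ℕ) (hBM : B ≤ M) :
    qBinom q ((A:ℤ) + M - B) ((M:ℤ) - B) * qBinom q (A:ℤ) (B:ℤ)
      = qBinom q ((A:ℤ) + M - B) (M:ℤ) * qBinom q (M:ℤ) (B:ℤ) := by
  rcases le_or_gt B A with hBA | hBA
  · have e1 : ((A:ℤ) + M - B) = ((A + M - B : ℕ) : ℤ) := by omega
    have e2 : ((M:ℤ) - B) = ((M - B : ℕ) : ℤ) := by omega
    rw [e1, e2, qBinom_eq_f (A+M-B) (M-B) (by omega), qBinom_eq_f A B hBA,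
      qBinom_eq_f (A+M-B) M (by omega), qBinom_eq_f M B hBM]
    rw [show A+M-B-(M-B) = A by omega, show A+M-B-M = A-B by omega]
    field_simp [f_ne]
  · rw [qBinom_gt (show (A:ℤ) < (B:ℤ) by exact_mod_cast hBA),
      qBinom_gt (show (A:ℤ) + M - B < (M:ℤ) by omega)]
    ring

lemma base_BC1 (A B : ℕ) (C : ℤ) (N : ℕ) (hBC : (B:ℤ) + C = 1) :
    Sg A B C N = Rg A B C N := by
  rw [Sg, Rg]
  have hz : ∀ r ∈ Finset.range (N+1), r ≠ B →
      q ^ ((r:ℤ) * (C + (r:ℤ) - 1)) *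
        qBinom q ((A:ℤ) + (B:ℤ) + C + (N:ℤ) - (r:ℤ) - 1) ((N:ℤ) - (r:ℤ)) *
        qBinom q ((B:ℤ) + C - 1) ((B:ℤ) - (r:ℤ)) * qBinom q (A:ℤ) (r:ℤ) = 0 := by
    intro r _ hrB
    rcases lt_or_gt_of_ne hrB with h | h
    · rw [qBinom_gt (show (B:ℤ) + C - 1 < (B:ℤ) - r by
        have : (r:ℤ) < (B:ℤ) := by exact_mod_cast h
        omega)]
      ring
    · rw [qBinom_neg (show (B:ℤ) - (r:ℤ) < 0 by
        have : (B:ℤ) < (r:ℤ) := by exact_mod_cast h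
        omega)]
      ring
  rcases le_or_gt B N with hBN | hBN
  · rw [Finset.sum_eq_single_of_mem B (Finset.mem_range.mpr (by omega)) hz]
    rw [show ((B:ℤ) * (C + (B:ℤ) - 1)) = 0 by
        rw [show C + (B:ℤ) - 1 = 0 by omega]; ring, zpow_zero,
      show ((B:ℤ) + C - 1) = 0 by omega,
      show ((B:ℤ) - (B:ℤ)) = 0 by ring,
      qBinom_zero (le_refl (0:ℤ)),
      show ((A:ℤ) + (B:ℤ) + C + (N:ℤ) - (B:ℤ) - 1) = (A:ℤ) + N - B by omega,
      show ((A:ℤ) + C + (N:ℤ) - 1) = (A:ℤ) + N - B by omega,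
      show ((B:ℤ) + C + (N:ℤ) - 1) = (N:ℤ) by omega]
    rw [show (1 : RatFunc ℚ) *
        qBinom q ((A:ℤ) + N - B) ((N:ℤ) - B) * 1 * qBinom q (A:ℤ) (B:ℤ)
        = qBinom q ((A:ℤ) + N - B) ((N:ℤ) - B) * qBinom q (A:ℤ) (B:ℤ) by ring]
    exact prodswap A B N hBN
  · rw [Finset.sum_eq_zero (by
      intro r hr
      exact hz r hr (by have := Finset.mem_range.mp hr; omega))]
    rw [show ((B:ℤ) + C + (N:ℤ) - 1) = (N:ℤ) by omega,
      qBinom_gt (show (N:ℤ) < (B:ℤ) by exact_mod_cast hBN)]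
    ring
lemma ridentity (A B : ℕ) (C : ℤ) (N : ℕ) (hB : 1 ≤ B) (hBC : 2 ≤ (B:ℤ) + C) :
    Rg A B C (N+1) = Rg A B C N + q ^ ((N:ℤ)+1) * Rg A B (C-1) (N+1)
      + q ^ ((N:ℤ)+C) * Rg A (B-1) C (N+1) := by
  have hB' : (1:ℤ) ≤ (B:ℤ) := by exact_mod_cast hB
  rw [Rg, Rg, Rg, Rg]
  push_cast [Nat.cast_sub hB]
  rw [show ((A:ℤ) + C + (N+1) - 1) = (A:ℤ) + C + N by ring,
    show ((B:ℤ) + C + (N+1) - 1) = (B:ℤ) + C + N by ring,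
    show ((A:ℤ) + (C-1) + (N+1) - 1) = (A:ℤ) + C + N - 1 by ring,
    show ((B:ℤ) + (C-1) + (N+1) - 1) = (B:ℤ) + C + N - 1 by ring,
    show ((B:ℤ) - 1 + C + (N+1) - 1) = (B:ℤ) + C + N - 1 by ring]
  rcases le_or_gt ((A:ℤ) + C + N) 0 with h0 | h0
  · rw [qBinom_of_not ((A:ℤ)+C+N) ((N:ℤ)+1) (by omega),
      qBinom_of_not ((A:ℤ)+C+N-1) (N:ℤ) (by omega),
      qBinom_of_not ((A:ℤ)+C+N-1) ((N:ℤ)+1) (by omega)]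
    ring
  · have p1 := pascal2 ((A:ℤ)+C+N-1) ((N:ℤ)+1) (by omega)
    rw [show (A:ℤ)+C+N-1+1 = (A:ℤ)+C+N by ring,
      show (N:ℤ)+1-1 = (N:ℤ) by ring] at p1
    have p2 := pascal1 ((B:ℤ)+C+N-1) (B:ℤ) (by omega)
    rw [show (B:ℤ)+C+N-1+1 = (B:ℤ)+C+N by ring,
      show (B:ℤ)+C+N-(B:ℤ) = (N:ℤ)+C by ring] at p2
    rw [p1, p2]
    ring
lemma term_split (a b c n r : ℤ) (ha : 1 ≤ a) (hbc : 2 ≤ b + c) (h0r : 0 ≤ r)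
    (hrn : r ≤ n + 1) :
    q ^ (r * (c + r - 1)) * qBinom q (a + b + c + (n + 1) - r - 1) (n + 1 - r) *
        qBinom q (b + c - 1) (b - r) * qBinom q a r
    = q ^ (r * (c + r - 1)) * qBinom q (a + b + c + n - r - 1) (n - r) *
          qBinom q (b + c - 1) (b - r) * qBinom q a r
      + q ^ (n + 1) * (q ^ (r * (c - 1 + r - 1)) *
          qBinom q (a + b + (c - 1) + (n + 1) - r - 1) (n + 1 - r) *
          qBinom q (b + (c - 1) - 1) (b - r) * qBinom q a r)
      + q ^ (n + c) * (q ^ (r * (c + r - 1)) *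
          qBinom q (a + (b - 1) + c + (n + 1) - r - 1) (n + 1 - r) *
          qBinom q (b - 1 + c - 1) (b - 1 - r) * qBinom q a r) := by
  have p1 := pascal2 (a + b + c + n - r - 1) (n + 1 - r) (by omega)
  rw [show a + b + c + n - r - 1 + 1 = a + b + c + n - r by ring,
      show n + 1 - r - 1 = n - r by ring] at p1
  have p2 := pascal1 (b + c - 2) (b - r) (by omega)
  rw [show b + c - 2 + 1 = b + c - 1 by ring,
      show b + c - 1 - (b - r) = c + r - 1 by ring] at p2
  rw [show a + b + c + (n + 1) - r - 1 = a + b + c + n - r by ring,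
      show a + b + (c - 1) + (n + 1) - r - 1 = a + b + c + n - r - 1 by ring,
      show a + (b - 1) + c + (n + 1) - r - 1 = a + b + c + n - r - 1 by ring,
      show b + (c - 1) - 1 = b + c - 2 by ring,
      show b - 1 + c - 1 = b + c - 2 by ring,
      show b - 1 - r = b - r - 1 by ring]
  rw [p1, p2]
  have he1 : q ^ (r * (c + r - 1)) * q ^ (n + 1 - r)
      = q ^ (n + 1) * q ^ (r * (c - 1 + r - 1)) := by
    rw [← zpow_add₀ q_ne_zero, ← zpow_add₀ q_ne_zero]; congr 1; ring
  have he2 : q ^ (r * (c + r - 1)) * (q ^ (n + 1 - r) * q ^ (c + r - 1))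
      = q ^ (n + c) * q ^ (r * (c + r - 1)) := by
    rw [← zpow_add₀ q_ne_zero, ← zpow_add₀ q_ne_zero, ← zpow_add₀ q_ne_zero]
    congr 1; ring
  linear_combination
    (qBinom q (a+b+c+n-r-1) (n+1-r) * qBinom q (b+c-2) (b-r) * qBinom q a r) * he1
    + (qBinom q (a+b+c+n-r-1) (n+1-r) * qBinom q (b+c-2) (b-r-1) * qBinom q a r) * he2

lemma master (A B : ℕ) (C : ℤ) (N : ℕ) (hA : 1 ≤ A) (hB : 1 ≤ B)
    (hBC : 2 ≤ (B:ℤ) + C) :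
    Sg A B C (N+1) = Sg A B C N + q ^ ((N:ℤ)+1) * Sg A B (C-1) (N+1)
      + q ^ ((N:ℤ)+C) * Sg A (B-1) C (N+1) := by
  have hA' : (1:ℤ) ≤ (A:ℤ) := by exact_mod_cast hA
  have hU : Sg A B C N = ∑ r ∈ Finset.range (N+1+1),
      (q ^ ((r:ℤ) * (C + (r:ℤ) - 1)) *
        qBinom q ((A:ℤ) + (B:ℤ) + C + (N:ℤ) - (r:ℤ) - 1) ((N:ℤ) - (r:ℤ)) *
        qBinom q ((B:ℤ) + C - 1) ((B:ℤ) - (r:ℤ)) * qBinom q (A:ℤ) (r:ℤ)) := by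
    rw [Sg]
    conv_rhs => rw [Finset.sum_range_succ]
    rw [qBinom_neg (show (N:ℤ) - ((N+1:ℕ):ℤ) < 0 by push_cast; omega)]
    simp
  rw [hU, Sg, Sg, Sg]
  push_cast [Nat.cast_sub hB]
  rw [Finset.mul_sum, Finset.mul_sum, ← Finset.sum_add_distrib, ← Finset.sum_add_distrib]
  apply Finset.sum_congr rfl
  intro r hr
  have h0r : (0:ℤ) ≤ (r:ℤ) := Int.natCast_nonneg r
  have hrn : (r:ℤ) ≤ (N:ℤ) + 1 := by
    have := Finset.mem_range.mp hr; exact_mod_cast Nat.lt_succ_iff.mp this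
  exact term_split (A:ℤ) (B:ℤ) C (N:ℤ) (r:ℤ) hA' hBC h0r hrn
lemma main (N : ℕ) : ∀ (A B : ℕ) (C : ℤ), 1 ≤ A → 1 ≤ (B:ℤ) + C →
    Sg A B C N = Rg A B C N := by
  induction N with
  | zero => exact fun A B C hA hBC => base_N0 A B C hA hBC
  | succ N ihN =>
    suffices H : ∀ (k : ℕ) (A B : ℕ) (C : ℤ), 1 ≤ A → (B:ℤ) + C = (k:ℤ) + 1 →
        Sg A B C (N+1) = Rg A B C (N+1) by
      intro A B C hA hBC
      obtain ⟨k, hk⟩ : ∃ k : ℕ, (B:ℤ) + C = (k:ℤ) + 1 :=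
        ⟨((B:ℤ) + C - 1).toNat, by omega⟩
      exact H k A B C hA hk
    intro k
    induction k with
    | zero =>
      intro A B C hA hBC
      exact base_BC1 A B C (N+1) (by exact_mod_cast hBC)
    | succ k ihk =>
      intro A B C hA hBC
      rcases Nat.eq_zero_or_pos B with rfl | hB
      · exact base_B0 A C (N+1) (by push_cast at hBC; omega)
      · have hBC2 : 2 ≤ (B:ℤ) + C := by push_cast at hBC ⊢; omega
        rw [master A B C N hA hB hBC2,
          ihN A B C hA (by omega),
          ihk A B (C-1) hA (by push_cast at hBC ⊢; omega),
          ihk A (B-1) C hA (by push_cast [Nat.cast_sub hB] at hBC ⊢; omega)]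
        exact (ridentity A B C N hB hBC2).symm
end QS

theorem q_suranyi_general (A B N C : ℕ) (hA : 0 < A) (hB : 0 < B) (hN : 0 < N)
    (hC : 0 < C) (h : A + B < C + N) :
    ∑ r ∈ Finset.range (min (min A B) (min N (A + B + C + N - 1)) + 1),
      (RatFunc.X : RatFunc ℚ) ^ (r * (C + r - 1)) *
        qBinom RatFunc.X ((A : ℤ) + B + C + N - r - 1) ((N : ℤ) - r) *
        qBinom RatFunc.X ((B : ℤ) + C - 1) ((B : ℤ) - r) *
        qBinom RatFunc.X (A : ℤ) (r : ℤ)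
    = qBinom RatFunc.X ((A : ℤ) + C + N - 1) (N : ℤ) *
        qBinom RatFunc.X ((B : ℤ) + C + N - 1) (B : ℤ) := by
  have key := QS.main N A B (C:ℤ) hA (by push_cast; omega)
  rw [QS.Sg, QS.Rg] at key
  have hsub : Finset.range (min (min A B) (min N (A + B + C + N - 1)) + 1)
      ⊆ Finset.range (N+1) := Finset.range_subset_range.mpr (by omega)
  calc ∑ r ∈ Finset.range (min (min A B) (min N (A + B + C + N - 1)) + 1),
      (RatFunc.X : RatFunc ℚ) ^ (r * (C + r - 1)) *
        qBinom RatFunc.X ((A : ℤ) + B + C + N - r - 1) ((N : ℤ) - r) *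
        qBinom RatFunc.X ((B : ℤ) + C - 1) ((B : ℤ) - r) *
        qBinom RatFunc.X (A : ℤ) (r : ℤ)
      = ∑ r ∈ Finset.range (min (min A B) (min N (A + B + C + N - 1)) + 1),
        (RatFunc.X : RatFunc ℚ) ^ ((r:ℤ) * ((C:ℤ) + (r:ℤ) - 1)) *
          qBinom RatFunc.X ((A : ℤ) + B + C + N - r - 1) ((N : ℤ) - r) *
          qBinom RatFunc.X ((B : ℤ) + C - 1) ((B : ℤ) - r) *
          qBinom RatFunc.X (A : ℤ) (r : ℤ) := by
        apply Finset.sum_congr rfl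
        intro r _
        have e : (RatFunc.X : RatFunc ℚ) ^ (r * (C + r - 1))
            = (RatFunc.X : RatFunc ℚ) ^ ((r:ℤ) * ((C:ℤ) + (r:ℤ) - 1)) := by
          rw [← zpow_natCast]
          congr 1
          push_cast [Nat.cast_sub (show 1 ≤ C + r by omega)]
          ring
        rw [e]
    _ = ∑ r ∈ Finset.range (N+1),
        (RatFunc.X : RatFunc ℚ) ^ ((r:ℤ) * ((C:ℤ) + (r:ℤ) - 1)) *
          qBinom RatFunc.X ((A : ℤ) + B + C + N - r - 1) ((N : ℤ) - r) *
          qBinom RatFunc.X ((B : ℤ) + C - 1) ((B : ℤ) - r) *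
          qBinom RatFunc.X (A : ℤ) (r : ℤ) := by
        apply Finset.sum_subset hsub
        intro r hr hrs
        have hr' := Finset.mem_range.mp hr
        have hab : A < r ∨ B < r := by
          simp only [Finset.mem_range] at hrs
          omega
        rcases hab with hab | hab
        · rw [QS.qBinom_gt (show (A:ℤ) < (r:ℤ) by exact_mod_cast hab)]
          ring
        · rw [QS.qBinom_neg (show (B:ℤ) - (r:ℤ) < 0 by
            have : (B:ℤ) < (r:ℤ) := by exact_mod_cast hab
            omega)]
          ring
    _ = qBinom RatFunc.X ((A : ℤ) + C + N - 1) (N : ℤ) *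
        qBinom RatFunc.X ((B : ℤ) + C + N - 1) (B : ℤ) := key
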